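/- Nested Δ-time invariance for the bad-state predicate: for G-clock constraints φ₁, φ₂, φ₃, the predicate Φ(u) := ∃Δ ∈ ℝ≥0, (u+Δ ⊨ φ₁) ∧ ∀δ ∈ [0,Δ], ((u+δ ⊨ φ₂) ∧ ∀δ' ∈ [0,δ], (u+δ' ⊨ φ₃)) is invariant under extended-region equivalence: if u₁ and u₂ lie in the same extended clock region, then Φ(u₁) ↔ Φ(u₂). -/
import Mathlib


inductive CC (C : Type) : Type where
  | lt (x : C) (n : ℕ)
  | eq (x : C) (n : ℕ)
  | gt (x : C) (n : ℕ)
  | dlt (x y : C) (n : ℕ)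
  | deq (x y : C) (n : ℕ)
  | dgt (x y : C) (n : ℕ)
  | and (φ ψ : CC C)
  | or (φ ψ : CC C)

/-- Satisfaction of a clock constraint by a clock valuation `u : C → ℝ≥0`. -/
def sat {C : Type} (u : C → NNReal) : CC C → Prop
  | .lt x n => (u x : ℝ) < n
  | .eq x n => (u x : ℝ) = n
  | .gt x n => (u x : ℝ) > n
  | .dlt x y n => (u x : ℝ) - (u y : ℝ) < n
  | .deq x y n => (u x : ℝ) - (u y : ℝ) = n
  | .dgt x y n => (u x : ℝ) - (u y : ℝ) > n
  | .and φ ψ => sat u φ ∧ sat u ψ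
  | .or φ ψ => sat u φ ∨ sat u ψ

/-- `shift u δ` increases every clock by `δ`. -/
def shift {C : Type} (u : C → NNReal) (δ : NNReal) : C → NNReal := fun x => u x + δ

open Classical in
/-- `resetVal u r` maps clocks in `r` to `0` and agrees with `u` elsewhere. -/
noncomputable def resetVal {C : Type} (u : C → NNReal) (r : Set C) : C → NNReal :=
  fun x => if x ∈ r then 0 else u x

/-- `Bounded k φ`: all bounds in atomic constraints are at most the clock ceilings,
i.e. `φ` is a `G`-clock constraint. -/
def Bounded {C : Type} (k : C → ℕ) : CC C → Prop
  | .lt x n => n ≤ k x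
  | .eq x n => n ≤ k x
  | .gt x n => n ≤ k x
  | .dlt x _ n => n ≤ k x
  | .deq x _ n => n ≤ k x
  | .dgt x _ n => n ≤ k x
  | .and φ ψ => Bounded k φ ∧ Bounded k ψ
  | .or φ ψ => Bounded k φ ∧ Bounded k ψ

/-- Two valuations lie in the same extended clock region: each clock's value compares
identically with every integer up to its ceiling, and each difference of two distinct
clocks compares identically with every relevant integer. -/
def RegionEquiv {C : Type} (k : C → ℕ) (u₁ u₂ : C → NNReal) : Prop :=
  (∀ x : C, ∀ n : ℕ, n ≤ k x →
    (((u₁ x : ℝ) < n) ↔ ((u₂ x : ℝ) < n)) ∧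
    (((u₁ x : ℝ) = n) ↔ ((u₂ x : ℝ) = n)) ∧
    (((u₁ x : ℝ) > n) ↔ ((u₂ x : ℝ) > n))) ∧
  (∀ x y : C, x ≠ y → ∀ m : ℤ, -(k x : ℤ) ≤ m → m ≤ (k y : ℤ) →
    (((u₁ y : ℝ) - (u₁ x : ℝ) < (m : ℝ)) ↔ ((u₂ y : ℝ) - (u₂ x : ℝ) < (m : ℝ))) ∧
    (((u₁ y : ℝ) - (u₁ x : ℝ) = (m : ℝ)) ↔ ((u₂ y : ℝ) - (u₂ x : ℝ) = (m : ℝ))) ∧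
    (((u₁ y : ℝ) - (u₁ x : ℝ) > (m : ℝ)) ↔ ((u₂ y : ℝ) - (u₂ x : ℝ) > (m : ℝ))))

section Aux

lemma sep_point (A B : Finset ℝ) (hab : ∀ a ∈ A, ∀ b ∈ B, a < b) :
    ∃ y, (∀ a ∈ A, a < y) ∧ (∀ b ∈ B, y < b) := by
  rcases A.eq_empty_or_nonempty with rfl|hA
  · rcases B.eq_empty_or_nonempty with rfl|hB
    · exact ⟨0, by simp, by simp⟩
    · exact ⟨B.min' hB - 1, by simp, fun b hb => by have := B.min'_le b hb; linarith⟩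
  · rcases B.eq_empty_or_nonempty with rfl|hB
    · exact ⟨A.max' hA + 1, fun a ha => by have := A.le_max' a ha; linarith, by simp⟩
    · refine ⟨(A.max' hA + B.min' hB)/2, fun a ha => ?_, fun b hb => ?_⟩
      · have h1 := A.le_max' a ha
        have h2 := hab _ (A.max'_mem hA) _ (B.min'_mem hB)
        linarith
      · have h1 := B.min'_le b hb
        have h2 := hab _ (A.max'_mem hA) _ (B.min'_mem hB)
        linarith

lemma match_point {ι : Type*} (s : Finset ι) (c d : ι → ℝ)
    (h : ∀ i ∈ s, ∀ j ∈ s, c i < c j ↔ d i < d j) (x : ℝ) :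
    ∃ y : ℝ, ∀ i ∈ s, (x < c i ↔ y < d i) ∧ (x = c i ↔ y = d i) ∧ (c i < x ↔ d i < y) := by
  classical
  have heq : ∀ i ∈ s, ∀ j ∈ s, (c i = c j ↔ d i = d j) := by
    intro i hi j hj
    constructor
    · intro e
      rcases lt_trichotomy (d i) (d j) with h'|h'|h'
      · exact absurd ((h i hi j hj).mpr h') (by simp [e])
      · exact h'
      · exact absurd ((h j hj i hi).mpr h') (by simp [e])
    · intro e
      rcases lt_trichotomy (c i) (c j) with h'|h'|h'
      · exact absurd ((h i hi j hj).mp h') (by simp [e])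
      · exact h'
      · exact absurd ((h j hj i hi).mp h') (by simp [e])
  by_cases hx : ∃ i ∈ s, c i = x
  · obtain ⟨i, hi, hxi⟩ := hx
    refine ⟨d i, fun j hj => ⟨?_, ?_, ?_⟩⟩
    · rw [← hxi]; exact h i hi j hj
    · constructor
      · intro e; exact (heq i hi j hj).mp (by rw [hxi, e])
      · intro e; rw [← hxi]; exact (heq i hi j hj).mpr e
    · rw [← hxi]; exact h j hj i hi
  · push_neg at hx
    set L := s.filter (fun i => c i < x) with hL
    set U := s.filter (fun i => x < c i) with hU
    obtain ⟨y, hyA, hyB⟩ := sep_point (L.image d) (U.image d) (by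
      intro a ha b hb
      obtain ⟨i, hiL, rfl⟩ := Finset.mem_image.mp ha
      obtain ⟨j, hjU, rfl⟩ := Finset.mem_image.mp hb
      obtain ⟨hi, hci⟩ := Finset.mem_filter.mp hiL
      obtain ⟨hj, hcj⟩ := Finset.mem_filter.mp hjU
      exact (h i hi j hj).mp (lt_trans hci hcj))
    have hLd : ∀ i ∈ s, c i < x → d i < y := fun i hi hci =>
      hyA _ (Finset.mem_image_of_mem d (Finset.mem_filter.mpr ⟨hi, hci⟩))
    have hUd : ∀ i ∈ s, x < c i → y < d i := fun i hi hci =>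
      hyB _ (Finset.mem_image_of_mem d (Finset.mem_filter.mpr ⟨hi, hci⟩))
    refine ⟨y, fun i hi => ?_⟩
    have htri : x < c i ∨ c i < x := by
      rcases lt_trichotomy x (c i) with h'|h'|h'
      · exact Or.inl h'
      · exact absurd h'.symm (hx i hi)
      · exact Or.inr h'
    refine ⟨⟨fun hh => hUd i hi hh, fun hh => ?_⟩, ⟨fun hh => absurd hh.symm (hx i hi), fun hh => ?_⟩,
      ⟨fun hh => hLd i hi hh, fun hh => ?_⟩⟩
    · rcases htri with h'|h'
      · exact h'
      · exact absurd hh (not_lt.mpr (le_of_lt (hLd i hi h')))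
    · rcases htri with h'|h'
      · exact absurd hh (ne_of_lt (hUd i hi h'))
      · exact absurd hh (ne_of_lt (hLd i hi h')).symm
    · rcases htri with h'|h'
      · exact absurd hh (not_lt.mpr (le_of_lt (hUd i hi h')))
      · exact h'

end Aux
noncomputable def thr {C : Type} (u : C → NNReal) : Option (C × ℕ) → ℝ
  | none => 0
  | some p => (p.2 : ℝ) - (u p.1 : ℝ)

noncomputable def thr1 {C : Type} (u : C → NNReal) (w : ℝ) : Option (Option (C × ℕ)) → ℝ
  | none => w
  | some j => thr u j

lemma regionEquiv_symm {C : Type} {k : C → ℕ} {u₁ u₂ : C → NNReal}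
    (h : RegionEquiv k u₁ u₂) : RegionEquiv k u₂ u₁ := by
  obtain ⟨ha, hb⟩ := h
  constructor
  · intro x n hn
    obtain ⟨p, q, r⟩ := ha x n hn
    exact ⟨p.symm, q.symm, r.symm⟩
  · intro x y hxy m h1 h2
    obtain ⟨p, q, r⟩ := hb x y hxy m h1 h2
    exact ⟨p.symm, q.symm, r.symm⟩

lemma sat_iff_of_regionEquiv {C : Type} {k : C → ℕ} {u₁ u₂ : C → NNReal}
    (h : RegionEquiv k u₁ u₂) : ∀ φ : CC C, Bounded k φ → (sat u₁ φ ↔ sat u₂ φ) := by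
  intro φ
  induction φ with
  | lt x n => exact fun hb => (h.1 x n hb).1
  | eq x n => exact fun hb => (h.1 x n hb).2.1
  | gt x n => exact fun hb => (h.1 x n hb).2.2
  | dlt x y n =>
    intro hb
    by_cases hxy : x = y
    · subst hxy; simp [sat]
    · have := (h.2 y x (Ne.symm hxy) (n : ℤ) (by omega) (by exact_mod_cast hb)).1
      push_cast at this
      exact this
  | deq x y n =>
    intro hb
    by_cases hxy : x = y
    · subst hxy; simp [sat]
    · have := (h.2 y x (Ne.symm hxy) (n : ℤ) (by omega) (by exact_mod_cast hb)).2.1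
      push_cast at this
      exact this
  | dgt x y n =>
    intro hb
    by_cases hxy : x = y
    · subst hxy; simp [sat]
    · have := (h.2 y x (Ne.symm hxy) (n : ℤ) (by omega) (by exact_mod_cast hb)).2.2
      push_cast at this
      exact this
  | and φ ψ ihφ ihψ => exact fun hb => and_congr (ihφ hb.1) (ihψ hb.2)
  | or φ ψ ihφ ihψ => exact fun hb => or_congr (ihφ hb.1) (ihψ hb.2)

lemma regionEquiv_shift {C : Type} {k : C → ℕ} {u₁ u₂ : C → NNReal}
    (h : RegionEquiv k u₁ u₂) (δ₁ δ₂ : NNReal)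
    (hM : ∀ x : C, ∀ n : ℕ, n ≤ k x →
      (((u₁ x : ℝ) + δ₁ < n ↔ (u₂ x : ℝ) + δ₂ < n) ∧
       ((u₁ x : ℝ) + δ₁ = n ↔ (u₂ x : ℝ) + δ₂ = n) ∧
       ((n : ℝ) < (u₁ x : ℝ) + δ₁ ↔ (n : ℝ) < (u₂ x : ℝ) + δ₂))) :
    RegionEquiv k (shift u₁ δ₁) (shift u₂ δ₂) := by
  constructor
  · intro x n hn
    obtain ⟨p, q, r⟩ := hM x n hn
    simp only [shift, NNReal.coe_add, gt_iff_lt]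
    exact ⟨p, q, r⟩
  · intro x y hxy m h1 h2
    obtain ⟨p, q, r⟩ := h.2 x y hxy m h1 h2
    simp only [shift, NNReal.coe_add, gt_iff_lt]
    refine ⟨⟨fun hh => ?_, fun hh => ?_⟩, ⟨fun hh => ?_, fun hh => ?_⟩, ⟨fun hh => ?_, fun hh => ?_⟩⟩
    · have := p.mp (by linarith); linarith
    · have := p.mpr (by linarith); linarith
    · have := q.mp (by linarith); linarith
    · have := q.mpr (by linarith); linarith
    · have := r.mp (by linarith); linarith
    · have := r.mpr (by linarith); linarith

lemma thr_lt_iff {C : Type} {k : C → ℕ} {u₁ u₂ : C → NNReal}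
    (h : RegionEquiv k u₁ u₂) :
    ∀ i j : Option (C × ℕ), (∀ p, i = some p → p.2 ≤ k p.1) → (∀ p, j = some p → p.2 ≤ k p.1) →
      (thr u₁ i < thr u₁ j ↔ thr u₂ i < thr u₂ j) := by
  intro i j hi hj
  match i, j with
  | none, none => simp
  | none, some (y, m) =>
    have hm : m ≤ k y := hj (y, m) rfl
    have := (h.1 y m hm).1
    simp only [thr]
    constructor
    · intro hh; have := this.mp (by linarith); linarith
    · intro hh; have := this.mpr (by linarith); linarith
  | some (x, n), none =>
    have hn : n ≤ k x := hi (x, n) rfl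
    have := (h.1 x n hn).2.2
    simp only [thr, gt_iff_lt] at this ⊢
    constructor
    · intro hh; have := this.mp (by linarith); linarith
    · intro hh; have := this.mpr (by linarith); linarith
  | some (x, n), some (y, m) =>
    have hn : n ≤ k x := hi (x, n) rfl
    have hm : m ≤ k y := hj (y, m) rfl
    by_cases hxy : x = y
    · subst hxy
      simp only [thr]
      constructor <;> intro hh <;> [skip; skip] <;> push_cast at * <;> linarith
    · have := (h.2 x y hxy ((m : ℤ) - n) (by omega) (by omega)).1
      push_cast at this
      simp only [thr]
      constructor
      · intro hh; have := this.mp (by linarith); linarith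
      · intro hh; have := this.mpr (by linarith); linarith
lemma until_transfer {C : Type} [Fintype C] (k : C → ℕ) (φ ψ : CC C)
    (hφ : Bounded k φ) (hψ : Bounded k ψ) (u₁ u₂ : C → NNReal) (h : RegionEquiv k u₁ u₂)
    (H : ∃ Δ : NNReal, sat (shift u₁ Δ) φ ∧ ∀ δ ≤ Δ, sat (shift u₁ δ) ψ) :
    ∃ Δ : NNReal, sat (shift u₂ Δ) φ ∧ ∀ δ ≤ Δ, sat (shift u₂ δ) ψ := by
  classical
  obtain ⟨Δ₁, hΔφ, hΔψ⟩ := H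
  set N := Finset.univ.sup k with hN
  set pairs : Finset (C × ℕ) :=
    (Finset.univ ×ˢ Finset.range (N + 1)).filter (fun p => p.2 ≤ k p.1) with hpairs
  set s₀ : Finset (Option (C × ℕ)) := insert none (pairs.image some) with hs₀
  have hmem : ∀ x n, n ≤ k x → some (x, n) ∈ s₀ := by
    intro x n hn
    refine Finset.mem_insert_of_mem (Finset.mem_image_of_mem some ?_)
    refine Finset.mem_filter.mpr ⟨Finset.mem_product.mpr ⟨Finset.mem_univ x, ?_⟩, hn⟩
    exact Finset.mem_range.mpr (Nat.lt_succ_of_le (hn.trans (Finset.le_sup (Finset.mem_univ x))))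
  have hinv : ∀ i ∈ s₀, ∀ p, i = some p → p.2 ≤ k p.1 := by
    intro i hi p hp
    subst hp
    rcases Finset.mem_insert.mp hi with h'|h'
    · exact absurd h' (by simp)
    · obtain ⟨q, hq, hq2⟩ := Finset.mem_image.mp h'
      obtain rfl : q = p := by injection hq2
      exact (Finset.mem_filter.mp hq).2
  have horder : ∀ i ∈ s₀, ∀ j ∈ s₀, thr u₁ i < thr u₁ j ↔ thr u₂ i < thr u₂ j :=
    fun i hi j hj => thr_lt_iff h i j (hinv i hi) (hinv j hj)
  obtain ⟨y, hy⟩ := match_point s₀ (thr u₁) (thr u₂) horder (Δ₁ : ℝ)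
  have hy_none := hy none (Finset.mem_insert_self _ _)
  simp only [thr] at hy_none
  have hy0 : 0 ≤ y := by
    rcases eq_or_lt_of_le Δ₁.coe_nonneg with h'|h'
    · have : y = 0 := (hy_none.2.1).mp h'.symm
      linarith
    · have : (0 : ℝ) < y := (hy_none.2.2).mp h'
      linarith
  set Δ₂ : NNReal := Real.toNNReal y with hΔ₂def
  have hΔ₂ : (Δ₂ : ℝ) = y := Real.coe_toNNReal y hy0
  have hM₀ : ∀ x : C, ∀ n : ℕ, n ≤ k x →
      (((u₁ x : ℝ) + Δ₁ < n ↔ (u₂ x : ℝ) + Δ₂ < n) ∧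
       ((u₁ x : ℝ) + Δ₁ = n ↔ (u₂ x : ℝ) + Δ₂ = n) ∧
       ((n : ℝ) < (u₁ x : ℝ) + Δ₁ ↔ (n : ℝ) < (u₂ x : ℝ) + Δ₂)) := by
    intro x n hn
    obtain ⟨p, q, r⟩ := hy (some (x, n)) (hmem x n hn)
    simp only [thr] at p q r
    rw [hΔ₂]
    refine ⟨⟨fun hh => ?_, fun hh => ?_⟩, ⟨fun hh => ?_, fun hh => ?_⟩, ⟨fun hh => ?_, fun hh => ?_⟩⟩
    · have := p.mp (by linarith); linarith
    · have := p.mpr (by linarith); linarith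
    · have := q.mp (by linarith); linarith
    · have := q.mpr (by linarith); linarith
    · have := r.mp (by linarith); linarith
    · have := r.mpr (by linarith); linarith
  have hre := regionEquiv_shift h Δ₁ Δ₂ hM₀
  refine ⟨Δ₂, (sat_iff_of_regionEquiv hre φ hφ).mp hΔφ, ?_⟩
  intro δ hδ
  set s₁ : Finset (Option (Option (C × ℕ))) := insert none (s₀.image some) with hs₁
  have horder₁ : ∀ i ∈ s₁, ∀ j ∈ s₁,
      thr1 u₂ y i < thr1 u₂ y j ↔ thr1 u₁ (Δ₁ : ℝ) i < thr1 u₁ (Δ₁ : ℝ) j := by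
    intro i hi j hj
    rcases Finset.mem_insert.mp hi with rfl|hi'
    · rcases Finset.mem_insert.mp hj with rfl|hj'
      · simp
      · obtain ⟨j', hj's, rfl⟩ := Finset.mem_image.mp hj'
        exact ((hy j' hj's).1).symm
    · obtain ⟨i', hi's, rfl⟩ := Finset.mem_image.mp hi'
      rcases Finset.mem_insert.mp hj with rfl|hj'
      · exact ((hy i' hi's).2.2).symm
      · obtain ⟨j', hj's, rfl⟩ := Finset.mem_image.mp hj'
        exact (horder i' hi's j' hj's).symm
  obtain ⟨y', hy'⟩ := match_point s₁ (thr1 u₂ y) (thr1 u₁ (Δ₁ : ℝ)) horder₁ (δ : ℝ)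
  have hy'_zero := hy' (some none)
    (Finset.mem_insert_of_mem (Finset.mem_image_of_mem some (Finset.mem_insert_self _ _)))
  have hy'_top := hy' none (Finset.mem_insert_self _ _)
  simp only [thr1, thr] at hy'_zero hy'_top
  have hy'0 : 0 ≤ y' := by
    rcases eq_or_lt_of_le δ.coe_nonneg with h'|h'
    · have : y' = 0 := (hy'_zero.2.1).mp h'.symm
      linarith
    · have : (0 : ℝ) < y' := (hy'_zero.2.2).mp h'
      linarith
  set δ' : NNReal := Real.toNNReal y' with hδ'def
  have hδ' : (δ' : ℝ) = y' := Real.coe_toNNReal y' hy'0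
  have hδ'Δ : δ' ≤ Δ₁ := by
    rw [← NNReal.coe_le_coe, hδ']
    have hδy : (δ : ℝ) ≤ y := by rw [← hΔ₂]; exact_mod_cast hδ
    rcases eq_or_lt_of_le hδy with h'|h'
    · have : y' = (Δ₁ : ℝ) := (hy'_top.2.1).mp h'
      linarith
    · have : y' < (Δ₁ : ℝ) := (hy'_top.1).mp h'
      linarith
  have hM₁ : ∀ x : C, ∀ n : ℕ, n ≤ k x →
      (((u₁ x : ℝ) + δ' < n ↔ (u₂ x : ℝ) + δ < n) ∧
       ((u₁ x : ℝ) + δ' = n ↔ (u₂ x : ℝ) + δ = n) ∧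
       ((n : ℝ) < (u₁ x : ℝ) + δ' ↔ (n : ℝ) < (u₂ x : ℝ) + δ)) := by
    intro x n hn
    obtain ⟨p, q, r⟩ := hy' (some (some (x, n)))
      (Finset.mem_insert_of_mem (Finset.mem_image_of_mem some (hmem x n hn)))
    simp only [thr1, thr] at p q r
    rw [hδ']
    refine ⟨⟨fun hh => ?_, fun hh => ?_⟩, ⟨fun hh => ?_, fun hh => ?_⟩, ⟨fun hh => ?_, fun hh => ?_⟩⟩
    · have := p.mpr (by linarith); linarith
    · have := p.mp (by linarith); linarith
    · have := q.mpr (by linarith); linarith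
    · have := q.mp (by linarith); linarith
    · have := r.mpr (by linarith); linarith
    · have := r.mp (by linarith); linarith
  have hre' := regionEquiv_shift h δ' δ hM₁
  exact (sat_iff_of_regionEquiv hre' ψ hψ).mp (hΔψ δ' hδ'Δ)
/-- Nested Δ-time invariance for the bad-state predicate: the predicate
  Φ(u) := ∃Δ, (u+Δ ⊨ φ₁) ∧ ∀δ ∈ [0,Δ], ((u+δ ⊨ φ₂) ∧ ∀δ' ∈ [0,δ], (u+δ' ⊨ φ₃))
is invariant under extended-region equivalence, for G-clock constraints φ₁, φ₂, φ₃. -/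
theorem nested_delta_time_invariance {C : Type} [Fintype C] (k : C → ℕ) (φ₁ φ₂ φ₃ : CC C)
    (h₁ : Bounded k φ₁) (h₂ : Bounded k φ₂) (h₃ : Bounded k φ₃)
    (u₁ u₂ : C → NNReal) (h : RegionEquiv k u₁ u₂) :
    (∃ Δ : NNReal, sat (shift u₁ Δ) φ₁ ∧
      ∀ δ ≤ Δ, sat (shift u₁ δ) φ₂ ∧ ∀ δ' ≤ δ, sat (shift u₁ δ') φ₃) ↔
    (∃ Δ : NNReal, sat (shift u₂ Δ) φ₁ ∧
      ∀ δ ≤ Δ, sat (shift u₂ δ) φ₂ ∧ ∀ δ' ≤ δ, sat (shift u₂ δ') φ₃) := by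
  have key : ∀ v₁ v₂ : C → NNReal, RegionEquiv k v₁ v₂ →
      (∃ Δ : NNReal, sat (shift v₁ Δ) φ₁ ∧
        ∀ δ ≤ Δ, sat (shift v₁ δ) φ₂ ∧ ∀ δ' ≤ δ, sat (shift v₁ δ') φ₃) →
      (∃ Δ : NNReal, sat (shift v₂ Δ) φ₁ ∧
        ∀ δ ≤ Δ, sat (shift v₂ δ) φ₂ ∧ ∀ δ' ≤ δ, sat (shift v₂ δ') φ₃) := by
    intro v₁ v₂ hv Hex
    obtain ⟨Δ, hA, hB⟩ := Hex
    obtain ⟨Δ', hA', hB'⟩ := until_transfer k φ₁ (CC.and φ₂ φ₃) h₁ ⟨h₂, h₃⟩ v₁ v₂ hv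
      ⟨Δ, hA, fun δ hδ => ⟨(hB δ hδ).1, (hB δ hδ).2 δ le_rfl⟩⟩
    exact ⟨Δ', hA', fun δ hδ => ⟨(hB' δ hδ).1, fun δ'' hδ'' => (hB' δ'' (hδ''.trans hδ)).2⟩⟩
  exact ⟨key u₁ u₂ h, key u₂ u₁ (regionEquiv_symm h)⟩
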